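/- arXiv:1902.01595 — 2 statements merged into one kernel-verified Lean document; each statement's English description precedes it below -/
import Mathlib

section
/- Let μ be a probability measure on the unit circle T and let v: D → ℝ be continuous on the unit disc. Define u(z) = ∫_T v(ξz) dμ(ξ). Then for every 0 < R < 1 and 0 ≤ θ ≤ π, u*(Re^{iθ}) ≤ v*(Re^{iθ}), where g*(Re^{iθ}) = sup_{|E| = 2θ} ∫_E g(Re^{it}) dt (supremum over measurable E ⊆ [-π,π] of Lebesgue measure 2θ). -/
open Complex MeasureTheory Metric Set
open scoped Real

/-- The Baernstein star-function of `g : ℝ → ℝ`: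
`g*(θ) = sup { ∫_E g(t) dt : E ⊆ [-π,π] measurable, |E| = 2θ }`. -/
noncomputable def starFn (g : ℝ → ℝ) (θ : ℝ) : ℝ :=
  sSup ((fun E => ∫ t in E, g t) ''
    {E : Set ℝ | MeasurableSet E ∧ E ⊆ Icc (-π) π ∧
      volume E = ENNReal.ofReal (2 * θ)})

lemma starFn_bddAbove (f : ℝ → ℝ) (hf : Continuous f) (θ : ℝ) :
    BddAbove ((fun E => ∫ t in E, f t) ''
      {E : Set ℝ | MeasurableSet E ∧ E ⊆ Icc (-π) π ∧
        volume E = ENNReal.ofReal (2 * θ)}) := by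
  refine ⟨∫ t in Icc (-π) π, |f t|, ?_⟩
  rintro x ⟨E, ⟨hE, hsub, -⟩, rfl⟩
  have hint : IntegrableOn (fun t => |f t|) (Icc (-π) π) := (hf.abs).integrableOn_Icc
  calc ∫ t in E, f t ≤ ∫ t in E, |f t| :=
        setIntegral_mono ((hf.integrableOn_Icc).mono_set hsub)
          (hint.mono_set hsub) (fun t => le_abs_self _)
    _ ≤ ∫ t in Icc (-π) π, |f t| :=
        setIntegral_mono_set hint (Filter.Eventually.of_forall fun t => abs_nonneg _)
          (HasSubset.Subset.eventuallyLE hsub)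

/-- Key rotation-invariance estimate: shifting the argument of a `2π`-periodic
continuous function does not increase set integrals over admissible sets. -/
lemma shift_integral_le_starFn (f : ℝ → ℝ) (hf : Continuous f)
    (hper : Function.Periodic f (2 * π)) (θ : ℝ)
    (E : Set ℝ) (hE : MeasurableSet E) (hsub : E ⊆ Icc (-π) π)
    (hvol : volume E = ENNReal.ofReal (2 * θ)) (α : ℝ) :
    ∫ t in E, f (t + α) ≤ starFn f θ := by
  have h2π : (0:ℝ) < 2 * π := by positivity
  -- reduce to a shift in [0, 2π)
  set β : ℝ := α - ⌊α / (2 * π)⌋ * (2 * π) with hβ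
  have hβ0 : 0 ≤ β := Int.sub_floor_div_mul_nonneg α h2π
  have hβlt : β < 2 * π := Int.sub_floor_div_mul_lt α h2π
  have hshift : ∀ t, f (t + α) = f (t + β) := by
    intro t
    have : t + β = t + α - ⌊α / (2 * π)⌋ * (2 * π) := by rw [hβ]; ring
    rw [this, hper.sub_int_mul_eq]
  simp only [hshift]
  -- translated set
  set S : Set ℝ := (fun x => x - β) ⁻¹' E with hSdef
  have hSm : MeasurableSet S := hE.preimage (measurable_id.sub_const β)
  have hSsub : S ⊆ Icc (β - π) (β + π) := by
    intro x hx
    have := hsub hx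
    simp only [mem_Icc] at this ⊢
    constructor <;> linarith [this.1, this.2]
  set A : Set ℝ := S ∩ Icc (-π) π with hAdef
  set C : Set ℝ := S \ Icc (-π) π with hCdef
  set B : Set ℝ := (fun x => x + 2 * π) ⁻¹' C with hBdef
  have hAm : MeasurableSet A := hSm.inter measurableSet_Icc
  have hCm : MeasurableSet C := hSm.diff measurableSet_Icc
  have hBm : MeasurableSet B := hCm.preimage (measurable_id.add_const _)
  have hAsub : A ⊆ Icc (-π) π := inter_subset_right
  have hCsub : C ⊆ Ioc π (β + π) := by
    intro x hx
    have h1 := hSsub hx.1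
    have h2 := hx.2
    simp only [mem_Icc, not_and, not_le] at h1 h2
    constructor
    · by_contra h
      push_neg at h
      exact absurd (h2 (by linarith [h1.1, Real.pi_pos])) (by linarith)
    · exact h1.2
  have hBsub : B ⊆ Icc (-π) π := by
    intro x hx
    have := hCsub hx
    simp only [mem_Ioc] at this
    constructor <;> linarith [this.1, this.2]
  have hABinter : A ∩ B ⊆ {β - π} := by
    intro x hx
    have h1 : β - π ≤ x := (hSsub hx.1.1).1
    have h2 : x + 2 * π ≤ β + π := (hCsub hx.2).2
    simp only [mem_singleton_iff]
    linarith
  have hABnull : volume (A ∩ B) = 0 :=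
    le_antisymm (le_trans (measure_mono hABinter) (by simp)) zero_le
  -- volume computations
  have hvolS : volume S = ENNReal.ofReal (2 * θ) := by
    have : S = (fun x => x + (-β)) ⁻¹' E := by
      ext x; simp [hSdef, sub_eq_add_neg]
    rw [this, measure_preimage_add_right, hvol]
  have hvolB : volume B = volume C := measure_preimage_add_right volume _ C
  have hvolAB : volume (A ∪ B) = ENNReal.ofReal (2 * θ) := by
    have h1 : volume (A ∪ B) + volume (A ∩ B) = volume A + volume B :=
      measure_union_add_inter A hBm
    rw [hABnull, add_zero] at h1
    rw [h1, hvolB]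
    have := measure_inter_add_diff (μ := volume) S (measurableSet_Icc (a := -π) (b := π))
    rw [← hAdef, ← hCdef] at this
    rw [this, hvolS]
  -- integrability
  have hIcc : IntegrableOn f (Icc (-π) π) := hf.integrableOn_Icc
  have hIA : IntegrableOn f A := hIcc.mono_set hAsub
  have hIB : IntegrableOn f B := hIcc.mono_set hBsub
  have hIC : IntegrableOn f C :=
    (hf.integrableOn_Icc (a := β - π) (b := β + π)).mono_set
      (fun x hx => hSsub hx.1)
  -- ∫_B f = ∫_C f using periodicity & translation invariance
  have hintB : ∫ t in C, f t = ∫ t in B, f t := by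
    have hmap : Measure.map (fun x : ℝ => x + 2 * π) volume = volume :=
      map_add_right_eq_self volume (2 * π)
    calc ∫ t in C, f t = ∫ t in C, f t ∂(Measure.map (fun x : ℝ => x + 2 * π) volume) := by
          rw [hmap]
      _ = ∫ x in B, f (x + 2 * π) := by
          rw [setIntegral_map hCm (by rw [hmap]; exact hf.aestronglyMeasurable)
            (measurable_add_const _).aemeasurable]
      _ = ∫ x in B, f x := by
          refine setIntegral_congr_fun hBm fun x _ => ?_
          exact hper x
  have hintAC : (∫ t in A, f t) + ∫ t in C, f t = ∫ t in S, f t := by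
    have hdisj : Disjoint A C :=
      Set.disjoint_left.mpr fun x hxA hxC => hxC.2 hxA.2
    have hunion : A ∪ C = S := inter_union_diff S _
    rw [← hunion]
    exact (setIntegral_union hdisj hCm hIA hIC).symm
  -- ∫_S f = ∫_E f(t+β)
  have hintS : ∫ t in S, f t = ∫ t in E, f (t + β) := by
    have hmap : Measure.map (fun x : ℝ => x + β) volume = volume :=
      map_add_right_eq_self volume β
    calc ∫ t in S, f t = ∫ t in S, f t ∂(Measure.map (fun x : ℝ => x + β) volume) := by
          rw [hmap]
      _ = ∫ x in (fun x : ℝ => x + β) ⁻¹' S, f (x + β) := by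
          rw [setIntegral_map hSm (by rw [hmap]; exact hf.aestronglyMeasurable)
            (measurable_add_const _).aemeasurable]
      _ = ∫ x in E, f (x + β) := by
          have hpre : (fun x : ℝ => x + β) ⁻¹' S = E := by
            ext x; simp [hSdef]
          rw [hpre]
  have hintAB : ∫ t in A ∪ B, f t = ∫ t in E, f (t + β) := by
    rw [integral_union_ae (by exact hABnull) hBm.nullMeasurableSet hIA hIB,
      ← hintB]
    linarith [hintAC, hintS]
  rw [← hintAB]
  exact le_csSup (starFn_bddAbove f hf θ) ⟨A ∪ B, ⟨hAm.union hBm, union_subset hAsub hBsub,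
    hvolAB⟩, rfl⟩

/-- Let `μ` be a probability measure on the unit circle `T` and
let `v : D → ℝ` be continuous on the unit disc.  Define `u(z) = ∫_T v(ξz) dμ(ξ)`.
Then for every `0 < R < 1` and `0 ≤ θ ≤ π`, `u*(Re^{iθ}) ≤ v*(Re^{iθ})`. -/
theorem star_of_average_le
    (μ : Measure (sphere (0:ℂ) 1)) [IsProbabilityMeasure μ]
    (v : ℂ → ℝ) (hv : ContinuousOn v (ball (0:ℂ) 1))
    (u : ℂ → ℝ)
    (hu : ∀ z ∈ ball (0:ℂ) 1, u z = ∫ ξ : sphere (0:ℂ) 1, v ((ξ : ℂ) * z) ∂μ)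
    (R : ℝ) (hR : R ∈ Ioo (0:ℝ) 1) (θ : ℝ) (hθ : θ ∈ Icc (0:ℝ) π) :
    starFn (fun t => u ((R : ℂ) * Complex.exp (t * Complex.I))) θ
      ≤ starFn (fun t => v ((R : ℂ) * Complex.exp (t * Complex.I))) θ := by
  obtain ⟨hR0, hR1⟩ := hR
  obtain ⟨hθ0, hθπ⟩ := hθ
  set f : ℝ → ℝ := fun t => v ((R : ℂ) * Complex.exp (t * Complex.I)) with hfdef
  -- points on the circle of radius R are in the ball
  have habs : ∀ t : ℝ, ‖(R : ℂ) * Complex.exp (t * Complex.I)‖ = R := by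
    intro t
    rw [norm_mul, Complex.norm_exp_ofReal_mul_I, Complex.norm_real, Real.norm_eq_abs, abs_of_pos hR0, mul_one]
  have hmem : ∀ t : ℝ, (R : ℂ) * Complex.exp (t * Complex.I) ∈ ball (0:ℂ) 1 := by
    intro t
    rw [mem_ball_zero_iff, habs]
    exact hR1
  have hf : Continuous f := by
    refine hv.comp_continuous ?_ hmem
    continuity
  have hper : Function.Periodic f (2 * π) := by
    intro t
    simp only [hfdef]
    congr 2
    push_cast
    rw [add_mul, Complex.exp_add, Complex.exp_two_pi_mul_I, mul_one]
  -- the set is nonempty : take E = Icc (-θ) θ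
  have hmemE0 : (∫ t in Icc (-θ) θ, u ((R : ℂ) * Complex.exp (t * Complex.I))) ∈
      ((fun E : Set ℝ => ∫ t in E, u ((R : ℂ) * Complex.exp ((t : ℝ) * Complex.I))) ''
        {E : Set ℝ | MeasurableSet E ∧ E ⊆ Icc (-π) π ∧
          volume E = ENNReal.ofReal (2 * θ)}) := by
    refine ⟨Icc (-θ) θ, ⟨measurableSet_Icc, Icc_subset_Icc (by linarith) hθπ, ?_⟩, rfl⟩
    rw [Real.volume_Icc]
    congr 1
    ring
  refine csSup_le ⟨_, hmemE0⟩ ?_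
  rintro b ⟨E, ⟨hE, hsub, hvol⟩, rfl⟩
  -- Fubini set-up
  set F : (sphere (0:ℂ) 1) × ℝ → ℝ :=
    fun p => v ((p.1 : ℂ) * ((R : ℂ) * Complex.exp (p.2 * Complex.I))) with hFdef
  have habs1 : ∀ ξ : sphere (0:ℂ) 1, ‖(ξ : ℂ)‖ = 1 := by
    intro ξ
    have := ξ.2
    rwa [mem_sphere_iff_norm, sub_zero] at this
  have hFf : ∀ p : (sphere (0:ℂ) 1) × ℝ, F p = f (p.2 + Complex.arg (p.1 : ℂ)) := by
    rintro ⟨ξ, t⟩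
    simp only [hFdef, hfdef]
    congr 1
    have hξ : (ξ : ℂ) = Complex.exp ((Complex.arg (ξ:ℂ) : ℂ) * Complex.I) := by
      conv_lhs => rw [← Complex.norm_mul_exp_arg_mul_I (ξ : ℂ)]
      rw [habs1 ξ]
      simp
    push_cast
    rw [add_mul, Complex.exp_add, ← hξ]
    ring
  -- uniform bound for f
  obtain ⟨M, hM⟩ : ∃ M, ∀ z ∈ Metric.sphere (0:ℂ) R, ‖v z‖ ≤ M := by
    have hcs : Metric.sphere (0:ℂ) R ⊆ ball (0:ℂ) 1 := fun z hz => by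
      rw [mem_sphere_zero_iff_norm] at hz
      rw [mem_ball_zero_iff, hz]; exact hR1
    exact (isCompact_sphere (0:ℂ) R).exists_bound_of_continuousOn (hv.mono hcs)
  have hfM : ∀ t : ℝ, ‖f t‖ ≤ M := fun t =>
    hM _ (by rw [mem_sphere_zero_iff_norm, habs t])
  -- integrability of F on the product
  haveI : IsFiniteMeasure (volume.restrict E) := ⟨by
    rw [Measure.restrict_apply_univ, hvol]; exact ENNReal.ofReal_lt_top⟩
  have hFcont : Continuous F := by
    refine hv.comp_continuous ?_ ?_
    · exact (continuous_subtype_val.comp continuous_fst).mul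
        (continuous_const.mul ((Complex.continuous_ofReal.comp continuous_snd).mul
          continuous_const).cexp)
    · intro p
      rw [mem_ball_zero_iff, norm_mul, habs1, one_mul, habs]
      exact hR1
  have hFint : Integrable F (μ.prod (volume.restrict E)) := by
    refine (integrable_const M).mono' hFcont.aestronglyMeasurable ?_
    refine Filter.Eventually.of_forall fun p => ?_
    rw [hFf p]
    exact hfM _
  -- Fubini
  have hswap : ∫ t in E, u ((R : ℂ) * Complex.exp (t * Complex.I))
      = ∫ ξ : sphere (0:ℂ) 1, (∫ t in E, F (ξ, t)) ∂μ := by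
    have h1 : ∀ t : ℝ, u ((R : ℂ) * Complex.exp (t * Complex.I))
        = ∫ ξ : sphere (0:ℂ) 1, F (ξ, t) ∂μ := fun t => hu _ (hmem t)
    calc ∫ t in E, u ((R : ℂ) * Complex.exp (t * Complex.I))
        = ∫ t in E, ∫ ξ : sphere (0:ℂ) 1, F (ξ, t) ∂μ := by
          exact setIntegral_congr_fun hE fun t _ => h1 t
      _ = ∫ ξ : sphere (0:ℂ) 1, (∫ t in E, F (ξ, t)) ∂μ :=
          (integral_integral_swap (f := fun ξ t => F (ξ, t)) hFint).symm
  show (∫ t in E, u ((R : ℂ) * Complex.exp ((t : ℝ) * Complex.I))) ≤ starFn f θ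
  rw [hswap]
  have hinner : ∀ ξ : sphere (0:ℂ) 1, (∫ t in E, F (ξ, t)) ≤ starFn f θ := by
    intro ξ
    have : (∫ t in E, F (ξ, t)) = ∫ t in E, f (t + Complex.arg (ξ : ℂ)) :=
      setIntegral_congr_fun hE fun t _ => hFf (ξ, t)
    rw [this]
    exact shift_integral_le_starFn f hf hper θ E hE hsub hvol _
  have hintinner : Integrable (fun ξ : sphere (0:ℂ) 1 => ∫ t in E, F (ξ, t)) μ :=
    hFint.integral_prod_left
  calc ∫ ξ : sphere (0:ℂ) 1, (∫ t in E, F (ξ, t)) ∂μ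
      ≤ ∫ _ : sphere (0:ℂ) 1, starFn f θ ∂μ :=
        integral_mono hintinner (integrable_const _) hinner
    _ = starFn f θ := by simp
end

section
/- Let u, v: [-π,π] → ℝ be integrable, and for 0 ≤ θ ≤ π define u*(θ) = sup_{|E|=2θ} ∫_E u dt and similarly v*. If u*(θ) ≤ v*(θ) for all θ ∈ [0,π], then for every convex increasing function Φ: ℝ → ℝ, ∫_{-π}^{π} Φ(u(t)) dt ≤ ∫_{-π}^{π} Φ(v(t)) dt. -/
open MeasureTheory Set Filter
open scoped Real Topology


lemma starSet_nonempty {θ : ℝ} (hθ0 : 0 ≤ θ) (hθ : θ ≤ π) :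
    (Icc (-π) (-π + 2*θ)) ∈ {E : Set ℝ | MeasurableSet E ∧ E ⊆ Icc (-π) π ∧
      volume E = ENNReal.ofReal (2 * θ)} := by
  refine ⟨measurableSet_Icc, Icc_subset_Icc le_rfl (by linarith), ?_⟩
  rw [Real.volume_Icc]
  ring_nf

lemma bddAbove_starSet {g : ℝ → ℝ} (hg : IntegrableOn g (Icc (-π) π)) :
    BddAbove ((fun E => ∫ t in E, g t) ''
      {E : Set ℝ | MeasurableSet E ∧ E ⊆ Icc (-π) π ∧
        volume E = ENNReal.ofReal (2 * θ)}) := by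
  refine ⟨∫ t in Icc (-π) π, |g t|, ?_⟩
  rintro x ⟨E, ⟨hEm, hEsub, hEvol⟩, rfl⟩
  calc ∫ t in E, g t ≤ ∫ t in E, |g t| :=
        integral_mono (hg.mono_set hEsub) (IntegrableOn.mono_set hg.abs hEsub) fun t => le_abs_self _
    _ ≤ ∫ t in Icc (-π) π, |g t| :=
        setIntegral_mono_set hg.abs (Filter.Eventually.of_forall fun t => abs_nonneg _)
          (HasSubset.Subset.eventuallyLE hEsub)

lemma integral_le_starFn {g : ℝ → ℝ} (hg : IntegrableOn g (Icc (-π) π))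
    {θ : ℝ} {E : Set ℝ} (hE : E ∈ {E : Set ℝ | MeasurableSet E ∧ E ⊆ Icc (-π) π ∧
      volume E = ENNReal.ofReal (2 * θ)}) :
    ∫ t in E, g t ≤ starFn g θ :=
  le_csSup (bddAbove_starSet hg) ⟨E, hE, rfl⟩

-- supremum is at most the plus-integral shifted
lemma starFn_le_plus {v : ℝ → ℝ} (hv : IntegrableOn v (Icc (-π) π))
    {θ : ℝ} (hθ0 : 0 ≤ θ) (hθ : θ ≤ π) (s : ℝ) :
    starFn v θ ≤ (∫ t in Icc (-π) π, max (v t - s) 0) + s * (2*θ) := by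
  have hne : ((fun E => ∫ t in E, v t) ''
      {E : Set ℝ | MeasurableSet E ∧ E ⊆ Icc (-π) π ∧
        volume E = ENNReal.ofReal (2 * θ)}).Nonempty :=
    ⟨_, mem_image_of_mem _ (starSet_nonempty hθ0 hθ)⟩
  refine csSup_le hne ?_
  rintro x ⟨E, ⟨hEm, hEsub, hEvol⟩, rfl⟩
  have hEfin : volume E ≠ ⊤ := by rw [hEvol]; exact ENNReal.ofReal_ne_top
  have hEvol' : (volume E).toReal = 2*θ := by
    rw [hEvol, ENNReal.toReal_ofReal (by linarith)]
  have hvE : IntegrableOn v E := hv.mono_set hEsub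
  have hconst : IntegrableOn (fun _ => s) E :=
    integrableOn_const hEfin
  have hplusI : IntegrableOn (fun t => max (v t - s) 0) (Icc (-π) π) :=
    (hv.sub (integrableOn_const (by rw [Real.volume_Icc]; exact ENNReal.ofReal_ne_top))).pos_part
  have h1 : ∫ t in E, v t = (∫ t in E, (v t - s)) + s * (2*θ) := by
    rw [integral_sub hvE hconst, setIntegral_const, measureReal_def, hEvol', smul_eq_mul]
    ring
  dsimp only
  rw [h1]
  have h2 : (∫ t in E, (v t - s)) ≤ ∫ t in E, max (v t - s) 0 :=
    integral_mono (hvE.sub hconst) (IntegrableOn.mono_set hplusI hEsub)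
      fun t => le_max_left _ _
  have h3 : (∫ t in E, max (v t - s) 0) ≤ ∫ t in Icc (-π) π, max (v t - s) 0 :=
    setIntegral_mono_set hplusI (Filter.Eventually.of_forall fun t => le_max_right _ _)
      (HasSubset.Subset.eventuallyLE hEsub)
  linarith

-- the key hinge comparison
lemma hinge_le {u v : ℝ → ℝ}
    (hu : IntegrableOn u (Icc (-π) π)) (hv : IntegrableOn v (Icc (-π) π))
    (hstar : ∀ θ ∈ Icc (0:ℝ) π, starFn u θ ≤ starFn v θ) (s : ℝ) :
    ∫ t in Icc (-π) π, max (u t - s) 0 ≤ ∫ t in Icc (-π) π, max (v t - s) 0 := by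
  have hπ := Real.pi_pos
  set I : Set ℝ := Icc (-π) π with hI
  have hIvol : volume I = ENNReal.ofReal (2*π) := by
    rw [hI, Real.volume_Icc]; ring_nf
  have hum := hu.aestronglyMeasurable
  set u' := hum.mk u with hu'def
  have hu'm : StronglyMeasurable u' := hum.stronglyMeasurable_mk
  have huae : u =ᵐ[volume.restrict I] u' := hum.ae_eq_mk
  have hu' : IntegrableOn u' I := hu.congr huae
  set E0 : Set ℝ := I ∩ {t | s < u' t} with hE0def
  have hE0m : MeasurableSet E0 :=
    measurableSet_Icc.inter (hu'm.measurable measurableSet_Ioi)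
  have hE0sub : E0 ⊆ I := inter_subset_left
  have hE0fin : volume E0 ≠ ⊤ := by
    refine ((measure_mono hE0sub).trans_lt ?_).ne
    rw [hIvol]; exact ENNReal.ofReal_lt_top
  set θ0 := (volume E0).toReal / 2 with hθ0def
  have hθ0nn : 0 ≤ θ0 := by positivity
  have hθ0le : θ0 ≤ π := by
    have : (volume E0).toReal ≤ (volume I).toReal := by
      apply ENNReal.toReal_mono _ (measure_mono hE0sub)
      rw [hIvol]; exact ENNReal.ofReal_ne_top
    rw [hIvol, ENNReal.toReal_ofReal (by linarith)] at this
    rw [hθ0def]; linarith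
  have hvolE0 : volume E0 = ENNReal.ofReal (2 * θ0) := by
    rw [hθ0def, mul_div_cancel₀ _ (two_ne_zero), ENNReal.ofReal_toReal hE0fin]
  have htR : (volume E0).toReal = 2 * θ0 := by
    rw [hvolE0, ENNReal.toReal_ofReal (by linarith)]
  have hIfin : volume I < ⊤ := by rw [hIvol]; exact ENNReal.ofReal_lt_top
  have hconstI : IntegrableOn (fun _ => s) I := integrableOn_const hIfin.ne
  have hplusu : IntegrableOn (fun t => max (u t - s) 0) I := (hu.sub hconstI).pos_part
  have hplusu' : IntegrableOn (fun t => max (u' t - s) 0) I := (hu'.sub hconstI).pos_part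
  -- step 1: change u to u'
  have step1 : ∫ t in I, max (u t - s) 0 = ∫ t in I, max (u' t - s) 0 :=
    integral_congr_ae (huae.mono fun t ht => by simp only [ht])
  -- step 2: reduce to E0
  have step2 : ∫ t in I, max (u' t - s) 0 = ∫ t in E0, (u' t - s) := by
    have hsplit := integral_inter_add_diff (f := fun t => max (u' t - s) 0)
      (s := I) (t := E0) hE0m hplusu'
    have hIE0 : I ∩ E0 = E0 := inter_eq_self_of_subset_right hE0sub
    rw [hIE0] at hsplit
    have hzero : ∫ t in I \ E0, max (u' t - s) 0 = 0 := by
      rw [setIntegral_congr_fun (measurableSet_Icc.diff hE0m)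
        (g := fun _ => (0:ℝ)) ?_, integral_zero]
      intro t ht
      have : ¬ s < u' t := fun hc => ht.2 ⟨ht.1, hc⟩
      simp [max_eq_right (by linarith : u' t - s ≤ 0)]
    have heq : ∫ t in E0, max (u' t - s) 0 = ∫ t in E0, (u' t - s) := by
      apply setIntegral_congr_fun hE0m
      intro t ht
      exact max_eq_left (by have := ht.2; simp only [mem_setOf_eq] at this; linarith)
    linarith [hsplit, hzero, heq]
  -- step 3: split off constant
  have hu'E0 : IntegrableOn u' E0 := hu'.mono_set hE0sub
  have step3 : ∫ t in E0, (u' t - s) = (∫ t in E0, u' t) - s * (2*θ0) := by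
    rw [integral_sub hu'E0 (integrableOn_const hE0fin),
      setIntegral_const, measureReal_def, htR, smul_eq_mul]
    ring
  -- step 4: back to u
  have step4 : ∫ t in E0, u' t = ∫ t in E0, u t :=
    integral_congr_ae (Filter.EventuallyEq.symm (ae_restrict_of_ae_restrict_of_subset hE0sub huae))
  -- step 5-7
  have step5 : ∫ t in E0, u t ≤ starFn u θ0 :=
    integral_le_starFn hu ⟨hE0m, hE0sub, hvolE0⟩
  have step6 : starFn u θ0 ≤ starFn v θ0 := hstar θ0 ⟨hθ0nn, hθ0le⟩
  have step7 := starFn_le_plus hv hθ0nn hθ0le s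
  linarith

noncomputable section

variable (Φ : ℝ → ℝ) (a Δ : ℝ)

/-- grid points -/
def gPt (i : ℕ) : ℝ := a + i * Δ

/-- chord slopes (with `gSl 0 = 0`) -/
def gSl (i : ℕ) : ℝ := if i = 0 then 0 else (Φ (gPt a Δ i) - Φ (gPt a Δ (i-1))) / Δ

/-- piecewise-linear minorant built from hinge functions -/
def gK (m : ℕ) (x : ℝ) : ℝ :=
  Φ a + ∑ i ∈ Finset.range m, (gSl Φ a Δ (i+1) - gSl Φ a Δ i) * max (x - gPt a Δ i) 0

lemma gSl_zero : gSl Φ a Δ 0 = 0 := rfl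

lemma gSl_succ (i : ℕ) :
    gSl Φ a Δ (i+1) = (Φ (gPt a Δ (i+1)) - Φ (gPt a Δ i)) / Δ := by
  simp [gSl]

lemma gPt_succ_sub (i : ℕ) : gPt a Δ (i+1) - gPt a Δ i = Δ := by
  simp only [gPt]; push_cast; ring

lemma gPt_mono (hΔ : 0 < Δ) : StrictMono (gPt a Δ) := by
  intro i j hij
  simp only [gPt, add_lt_add_iff_left]
  have : (i:ℝ) < j := by exact_mod_cast hij
  nlinarith

lemma gK_eval (m k : ℕ) (hk : k ≤ m) (x : ℝ)
    (h1 : ∀ i < k, gPt a Δ i ≤ x) (h2 : ∀ i, k ≤ i → i < m → x ≤ gPt a Δ i) :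
    gK Φ a Δ m x
      = Φ a + ∑ i ∈ Finset.range k, (gSl Φ a Δ (i+1) - gSl Φ a Δ i) * (x - gPt a Δ i) := by
  unfold gK
  congr 1
  rw [← Finset.sum_subset (Finset.range_subset_range.2 hk) ?_]
  · exact Finset.sum_congr rfl fun i hi => by
      rw [max_eq_left (sub_nonneg.2 (h1 i (Finset.mem_range.1 hi)))]
  · intro i hi hik
    have hki : k ≤ i := Nat.le_of_not_lt (fun hc => hik (Finset.mem_range.2 hc))
    rw [max_eq_right (sub_nonpos.2 (h2 i hki (Finset.mem_range.1 hi))), mul_zero]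

lemma gK_sub (m k : ℕ) (hk : k ≤ m) (x y : ℝ)
    (hx1 : ∀ i < k, gPt a Δ i ≤ x) (hx2 : ∀ i, k ≤ i → i < m → x ≤ gPt a Δ i)
    (hy1 : ∀ i < k, gPt a Δ i ≤ y) (hy2 : ∀ i, k ≤ i → i < m → y ≤ gPt a Δ i) :
    gK Φ a Δ m x = gK Φ a Δ m y + gSl Φ a Δ k * (x - y) := by
  rw [gK_eval Φ a Δ m k hk x hx1 hx2, gK_eval Φ a Δ m k hk y hy1 hy2]
  have h : ∑ i ∈ Finset.range k, (gSl Φ a Δ (i+1) - gSl Φ a Δ i) * (x - gPt a Δ i)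
      = (∑ i ∈ Finset.range k, (gSl Φ a Δ (i+1) - gSl Φ a Δ i) * (y - gPt a Δ i))
        + (∑ i ∈ Finset.range k, (gSl Φ a Δ (i+1) - gSl Φ a Δ i)) * (x - y) := by
    rw [Finset.sum_mul, ← Finset.sum_add_distrib]
    exact Finset.sum_congr rfl fun i _ => by ring
  rw [h, Finset.sum_range_sub (fun i => gSl Φ a Δ i), gSl_zero]
  ring

lemma gK_left (m : ℕ) (hΔ : 0 ≤ Δ) (x : ℝ) (hx : x ≤ a) : gK Φ a Δ m x = Φ a := by
  rw [gK_eval Φ a Δ m 0 (Nat.zero_le m) x (fun i hi => by omega) ?_]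
  · simp
  · intro i _ _
    refine hx.trans ?_
    simp only [gPt, le_add_iff_nonneg_right]
    positivity

lemma gK_grid (hΔ : 0 < Δ) (m : ℕ) : ∀ j, j ≤ m → gK Φ a Δ m (gPt a Δ j) = Φ (gPt a Δ j) := by
  intro j
  induction j with
  | zero => intro _; simpa [gPt] using gK_left Φ a Δ m hΔ.le a le_rfl
  | succ j ih =>
    intro hj
    have hjm : j ≤ m := by omega
    have hmono := gPt_mono a Δ hΔ
    have key := gK_sub Φ a Δ m (j+1) hj (gPt a Δ (j+1)) (gPt a Δ j)
      (fun i hi => (hmono.monotone (by omega)))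
      (fun i hi _ => (hmono.monotone (by omega)))
      (fun i hi => (hmono.monotone (by omega)))
      (fun i hi _ => (hmono.monotone (by omega)))
    rw [key, ih hjm, gSl_succ, gPt_succ_sub, div_mul_cancel₀ _ hΔ.ne']
    ring

variable {Φ a Δ} (hconv : ConvexOn ℝ univ Φ) (hmono : Monotone Φ) (hΔ : 0 < Δ)
include hconv hmono hΔ

lemma gSl_le_succ (i : ℕ) : gSl Φ a Δ i ≤ gSl Φ a Δ (i+1) := by
  cases i with
  | zero =>
    rw [gSl_zero, gSl_succ]
    have := hmono ((gPt_mono a Δ hΔ).monotone (Nat.zero_le 1))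
    exact div_nonneg (by linarith) hΔ.le
  | succ j =>
    rw [gSl_succ, gSl_succ]
    have h1 : gPt a Δ j < gPt a Δ (j+1) := gPt_mono a Δ hΔ (by omega)
    have h2 : gPt a Δ (j+1) < gPt a Δ (j+2) := gPt_mono a Δ hΔ (by omega)
    have := hconv.slope_mono_adjacent (mem_univ (gPt a Δ j)) (mem_univ (gPt a Δ (j+2))) h1 h2
    rw [gPt_succ_sub, gPt_succ_sub] at this
    exact this

lemma gSl_mono : Monotone (gSl Φ a Δ) :=
  monotone_nat_of_le_succ (gSl_le_succ hconv hmono hΔ)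

lemma gSl_nonneg (i : ℕ) : 0 ≤ gSl Φ a Δ i := by
  have := gSl_mono (a := a) hconv hmono hΔ (Nat.zero_le i)
  rwa [gSl_zero] at this

omit hmono

lemma chord_upper (j : ℕ) (x : ℝ) (h1 : gPt a Δ j ≤ x) (h2 : x ≤ gPt a Δ (j+1)) :
    Φ x ≤ Φ (gPt a Δ j) + gSl Φ a Δ (j+1) * (x - gPt a Δ j) := by
  rcases eq_or_lt_of_le h1 with heq | hlt1
  · rw [← heq]; simp
  rcases eq_or_lt_of_le h2 with heq | hlt2
  · rw [heq, gSl_succ, gPt_succ_sub, div_mul_cancel₀ _ hΔ.ne']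
    ring_nf
    exact le_rfl
  have haux := hconv.secant_mono_aux2 (mem_univ (gPt a Δ j)) (mem_univ (gPt a Δ (j+1))) hlt1 hlt2
  rw [gPt_succ_sub] at haux
  rw [gSl_succ]
  have hpos : 0 < x - gPt a Δ j := by linarith
  have := (div_le_div_iff₀ hpos hΔ).1 haux
  have h3 : (Φ x - Φ (gPt a Δ j)) ≤ (Φ (gPt a Δ (j+1)) - Φ (gPt a Δ j)) / Δ * (x - gPt a Δ j) := by
    rw [div_mul_eq_mul_div, le_div_iff₀ hΔ]
    linarith
  linarith

lemma beyond_lower (j : ℕ) (x : ℝ) (hx : gPt a Δ (j+1) ≤ x) :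
    Φ (gPt a Δ (j+1)) + gSl Φ a Δ (j+1) * (x - gPt a Δ (j+1)) ≤ Φ x := by
  rcases eq_or_lt_of_le hx with heq | hlt
  · rw [← heq]; simp
  have h1 : gPt a Δ j < gPt a Δ (j+1) := gPt_mono a Δ hΔ (by omega)
  have haux := hconv.slope_mono_adjacent (mem_univ (gPt a Δ j)) (mem_univ x) h1 hlt
  rw [gPt_succ_sub] at haux
  rw [gSl_succ]
  have hpos : 0 < x - gPt a Δ (j+1) := by linarith
  have := (div_le_div_iff₀ hΔ hpos).1 haux
  have h3 : (Φ (gPt a Δ (j+1)) - Φ (gPt a Δ j)) / Δ * (x - gPt a Δ (j+1))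
      ≤ Φ x - Φ (gPt a Δ (j+1)) := by
    rw [div_mul_eq_mul_div, div_le_iff₀ hΔ]
    linarith
  linarith

lemma gSl_ge_slope (j : ℕ) (h0 : 0 < gPt a Δ j) :
    (Φ (gPt a Δ (j+1)) - Φ 0) / (gPt a Δ (j+1)) ≤ gSl Φ a Δ (j+1) := by
  have h1 : gPt a Δ j < gPt a Δ (j+1) := gPt_mono a Δ hΔ (by omega)
  have haux := hconv.secant_mono_aux3 (mem_univ (0:ℝ)) (mem_univ (gPt a Δ (j+1))) h0 h1
  rw [gPt_succ_sub, sub_zero] at haux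
  rw [gSl_succ]
  exact haux
end

lemma support_line {Φ : ℝ → ℝ} (hconv : ConvexOn ℝ univ Φ) (hmono : Monotone Φ) :
    ∃ g0 : ℝ, 0 ≤ g0 ∧ (∀ x, Φ 0 + g0 * x ≤ Φ x) ∧ ∀ y, 0 < y → g0 ≤ (Φ y - Φ 0) / y := by
  set S : Set ℝ := (fun y => (Φ y - Φ 0) / y) '' Ioi 0 with hS
  have hSne : S.Nonempty := ⟨_, mem_image_of_mem _ (by norm_num : (1:ℝ) ∈ Ioi 0)⟩
  have hSlb : ∀ b ∈ S, (0:ℝ) ≤ b := by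
    rintro b ⟨y, hy, rfl⟩
    exact div_nonneg (sub_nonneg.2 (hmono (le_of_lt hy))) (le_of_lt hy)
  refine ⟨sInf S, le_csInf hSne hSlb, ?_, ?_⟩
  · intro x
    rcases lt_trichotomy x 0 with hx | hx | hx
    · have hle : (Φ 0 - Φ x) / (0 - x) ≤ sInf S := by
        refine le_csInf hSne ?_
        rintro b ⟨y, hy, rfl⟩
        have := hconv.slope_mono_adjacent (mem_univ x) (mem_univ y) hx hy
        simpa using this
      have hxpos : 0 < -x := by linarith
      rw [show (0:ℝ) - x = -x by ring, div_le_iff₀ hxpos] at hle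
      nlinarith
    · simp [hx]
    · have hle : sInf S ≤ (Φ x - Φ 0) / x := csInf_le ⟨0, hSlb⟩ (mem_image_of_mem _ hx)
      rw [le_div_iff₀ hx] at hle
      linarith
  · intro y hy
    exact csInf_le ⟨0, hSlb⟩ (mem_image_of_mem _ hy)

lemma tendsto_tail_top {w h : ℝ → ℝ} {I : Set ℝ}
    (hw : AEMeasurable w (volume.restrict I))
    (hmeas : Measurable h) (hnn : ∀ x, 0 ≤ h x)
    (hint : Integrable (fun t => h (w t)) (volume.restrict I)) :
    Tendsto (fun n : ℕ => ∫ t in I, Set.indicator (Ioi (n:ℝ)) h (w t)) atTop (𝓝 0) := by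
  have := tendsto_integral_of_dominated_convergence
      (F := fun (n:ℕ) => fun t => Set.indicator (Ioi (n:ℝ)) h (w t))
      (f := fun _ => (0:ℝ)) (bound := fun t => h (w t))
      (fun n => (((hmeas.indicator measurableSet_Ioi).comp_aemeasurable hw)).aestronglyMeasurable)
      hint
      (fun n => Eventually.of_forall fun t => by
        rw [Real.norm_eq_abs, abs_of_nonneg (Set.indicator_nonneg (fun x _ => hnn x) _)]
        exact Set.indicator_le_self' (fun x _ => hnn x) (w t))
      (Eventually.of_forall fun t => by
        obtain ⟨N, hN⟩ := exists_nat_ge (w t)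
        refine Tendsto.congr' ?_ tendsto_const_nhds
        refine eventuallyEq_of_mem (mem_atTop N) fun n hn => ?_
        exact (Set.indicator_of_notMem
          (by simp only [mem_Ioi, not_lt]; exact hN.trans (by exact_mod_cast hn)) h).symm)
  simpa using this

lemma tendsto_tail_bot {w h : ℝ → ℝ} {I : Set ℝ}
    (hw : AEMeasurable w (volume.restrict I))
    (hmeas : Measurable h) (hnn : ∀ x, 0 ≤ h x)
    (hint : Integrable (fun t => h (w t)) (volume.restrict I)) :
    Tendsto (fun n : ℕ => ∫ t in I, Set.indicator (Iio (-(n:ℝ))) h (w t)) atTop (𝓝 0) := by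
  have := tendsto_integral_of_dominated_convergence
      (F := fun (n:ℕ) => fun t => Set.indicator (Iio (-(n:ℝ))) h (w t))
      (f := fun _ => (0:ℝ)) (bound := fun t => h (w t))
      (fun n => (((hmeas.indicator measurableSet_Iio).comp_aemeasurable hw)).aestronglyMeasurable)
      hint
      (fun n => Eventually.of_forall fun t => by
        rw [Real.norm_eq_abs, abs_of_nonneg (Set.indicator_nonneg (fun x _ => hnn x) _)]
        exact Set.indicator_le_self' (fun x _ => hnn x) (w t))
      (Eventually.of_forall fun t => by
        obtain ⟨N, hN⟩ := exists_nat_ge (-(w t))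
        refine Tendsto.congr' ?_ tendsto_const_nhds
        refine eventuallyEq_of_mem (mem_atTop N) fun n hn => ?_
        refine (Set.indicator_of_notMem ?_ h).symm
        simp only [mem_Iio, not_lt]
        have : (N:ℝ) ≤ (n:ℝ) := by exact_mod_cast hn
        linarith)
  simpa using this

set_option maxHeartbeats 1000000 in
theorem convex_means_of_star_le
    (u v : ℝ → ℝ)
    (hu : IntegrableOn u (Icc (-π) π)) (hv : IntegrableOn v (Icc (-π) π))
    (hstar : ∀ θ ∈ Icc (0:ℝ) π, starFn u θ ≤ starFn v θ)
    (Φ : ℝ → ℝ) (hΦconv : ConvexOn ℝ univ Φ) (hΦmono : Monotone Φ)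
    (hΦu : IntegrableOn (fun t => Φ (u t)) (Icc (-π) π))
    (hΦv : IntegrableOn (fun t => Φ (v t)) (Icc (-π) π)) :
    (∫ t in (-π)..π, Φ (u t)) ≤ ∫ t in (-π)..π, Φ (v t) := by
  have hπ := Real.pi_pos
  have hcvt : ∀ f : ℝ → ℝ, (∫ t in (-π)..π, f t) = ∫ t in Icc (-π) π, f t := fun f => by
    rw [intervalIntegral.integral_of_le (by linarith), integral_Icc_eq_integral_Ioc]
  rw [hcvt, hcvt]
  have hIvol : volume (Icc (-π) π) = ENNReal.ofReal (2*π) := by rw [Real.volume_Icc]; ring_nf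
  have hIfin : volume (Icc (-π) π) < ⊤ := by rw [hIvol]; exact ENNReal.ofReal_lt_top
  have hIvolR : (volume (Icc (-π) π)).toReal = 2*π := by
    rw [hIvol, ENNReal.toReal_ofReal (by linarith)]
  have hconst : ∀ c : ℝ, IntegrableOn (fun _ => c) (Icc (-π) π) :=
    fun c => integrableOn_const hIfin.ne
  have hhing : ∀ (w : ℝ → ℝ), IntegrableOn w (Icc (-π) π) →
      ∀ c : ℝ, IntegrableOn (fun t => max (w t - c) 0) (Icc (-π) π) :=
    fun w hw c => (hw.sub (hconst c)).pos_part
  obtain ⟨g0, hg0nn, hL0, hg0le⟩ := support_line hΦconv hΦmono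
  have hΦcont : Continuous Φ := hΦconv.locallyLipschitz.continuous
  have huae : AEMeasurable u (volume.restrict (Icc (-π) π)) := hu.aestronglyMeasurable.aemeasurable
  have hvae : AEMeasurable v (volume.restrict (Icc (-π) π)) := hv.aestronglyMeasurable.aemeasurable
  set W : ℝ → ℝ := fun y => Φ y - (Φ 0 + g0 * y) with hWdef
  have hWnn : ∀ x, 0 ≤ W x := fun x => by have := hL0 x; simp only [hWdef]; linarith
  have hWmeas : Measurable W :=
    (hΦcont.sub (continuous_const.add (continuous_const.mul continuous_id))).measurable
  have hWu_int : Integrable (fun t => W (u t)) (volume.restrict (Icc (-π) π)) :=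
    hΦu.sub ((hconst (Φ 0)).add (hu.const_mul g0))
  set V : ℝ → ℝ := fun y => g0 * |y| with hVdef
  have hVnn : ∀ x, 0 ≤ V x := fun x => mul_nonneg hg0nn (abs_nonneg x)
  have hVmeas : Measurable V := (continuous_const.mul continuous_abs).measurable
  have hVv_int : Integrable (fun t => V (v t)) (volume.restrict (Icc (-π) π)) :=
    hv.abs.const_mul g0
  have hTU := tendsto_tail_top huae hWmeas hWnn hWu_int
  have hTV := tendsto_tail_bot hvae hVmeas hVnn hVv_int
  refine le_of_forall_sub_le fun ε hε => ?_
  have hε3 : 0 < ε/3 := by linarith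
  obtain ⟨N1, hN1⟩ := (Metric.tendsto_atTop.1 hTU) (ε/3) hε3
  obtain ⟨N2, hN2⟩ := (Metric.tendsto_atTop.1 hTV) (ε/3) hε3
  set n : ℕ := max (max N1 N2) 1 with hndef
  have hn1 : 1 ≤ n := le_max_right _ _
  set R : ℝ := (n:ℝ) with hRdef
  have hR1 : (1:ℝ) ≤ R := by rw [hRdef]; exact_mod_cast hn1
  have hRpos : (0:ℝ) < R := by linarith
  have hFUlt : |∫ t in Icc (-π) π, Set.indicator (Ioi R) W (u t)| < ε/3 := by
    have := hN1 n (le_trans (le_max_left _ _) (le_max_left _ _))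
    rwa [Real.dist_eq, sub_zero] at this
  have hFVlt : |∫ t in Icc (-π) π, Set.indicator (Iio (-R)) V (v t)| < ε/3 := by
    have := hN2 n (le_trans (le_max_right _ _) (le_max_left _ _))
    rwa [Real.dist_eq, sub_zero] at this
  set ε' : ℝ := ε/(3*(2*π+1)) with hε'def
  have hε'pos : 0 < ε' := by
    rw [hε'def]; apply div_pos hε; nlinarith
  obtain ⟨δ, hδpos, hδ⟩ := Metric.uniformContinuousOn_iff.1
    ((isCompact_Icc (a := -R) (b := R)).uniformContinuousOn_of_continuous
      hΦcont.continuousOn) ε' hε'pos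
  obtain ⟨M, hM⟩ := exists_nat_gt (2*R/δ)
  set m : ℕ := max M 3 with hmdef
  have hm3 : 3 ≤ m := le_max_right _ _
  have hmpos : (0:ℝ) < (m:ℕ) := by exact_mod_cast (by omega : 0 < m)
  set Δ : ℝ := 2*R/m with hΔdef
  have hΔpos : 0 < Δ := by rw [hΔdef]; positivity
  have hΔδ : Δ < δ := by
    have h1 : 2*R/δ < (m:ℝ) := hM.trans_le (by exact_mod_cast le_max_left M 3)
    rw [div_lt_iff₀ hδpos] at h1
    rw [hΔdef, div_lt_iff₀ hmpos]
    linarith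
  have hΔR : Δ < R := by
    rw [hΔdef, div_lt_iff₀ hmpos]
    have h3m : (3:ℝ) ≤ (m:ℕ) := by exact_mod_cast hm3
    nlinarith
  set a : ℝ := -R with hadef
  have hs0 : gPt a Δ 0 = a := by simp [gPt]
  have hsm : gPt a Δ m = R := by
    simp only [gPt, hΔdef, hadef]
    field_simp
    ring
  have hsmono := gPt_mono a Δ hΔpos
  have hsIcc : ∀ j, j ≤ m → gPt a Δ j ∈ Icc (-R) R := by
    intro j hj
    constructor
    · rw [hadef.symm]
      simp only [gPt, le_add_iff_nonneg_right]
      positivity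
    · calc gPt a Δ j ≤ gPt a Δ m := hsmono.monotone hj
        _ = R := hsm
  have hKval : ∀ j, j < m → ∀ x, gPt a Δ j ≤ x → x ≤ gPt a Δ (j+1) →
      gK Φ a Δ m x = Φ (gPt a Δ j) + gSl Φ a Δ (j+1) * (x - gPt a Δ j) := by
    intro j hj x hx1 hx2
    rw [gK_sub Φ a Δ m (j+1) (by omega) x (gPt a Δ j)
        (fun i hi => (hsmono.monotone (by omega)).trans hx1)
        (fun i hik him => hx2.trans (hsmono.monotone (by omega)))
        (fun i hi => hsmono.monotone (by omega))
        (fun i hik him => hsmono.monotone (by omega)),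
      gK_grid Φ a Δ hΔpos m j (by omega)]
  have hKtop : ∀ x, gPt a Δ m ≤ x →
      gK Φ a Δ m x = Φ (gPt a Δ m) + gSl Φ a Δ m * (x - gPt a Δ m) := by
    intro x hx
    rw [gK_sub Φ a Δ m m le_rfl x (gPt a Δ m)
        (fun i hi => (hsmono.monotone (by omega)).trans hx)
        (fun i hik him => absurd him (by omega))
        (fun i hi => hsmono.monotone (by omega))
        (fun i hik him => absurd him (by omega)),
      gK_grid Φ a Δ hΔpos m m le_rfl]
  obtain ⟨j0, hj0⟩ : ∃ j0, m = j0 + 1 := ⟨m - 1, by omega⟩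
  have hsj0 : gPt a Δ j0 = R - Δ := by
    have h := gPt_succ_sub a Δ j0
    rw [← hj0, hsm] at h
    linarith
  have hgslm : g0 ≤ gSl Φ a Δ m := by
    have h0 : 0 < gPt a Δ j0 := by rw [hsj0]; linarith
    have h1 := gSl_ge_slope hΦconv hΔpos j0 h0
    rw [← hj0] at h1
    have h2 := hg0le (gPt a Δ m) (by rw [hsm]; linarith)
    linarith
  have claim1 : ∀ j, j ≤ m → ∀ x, x ≤ gPt a Δ j → Φ x ≤ gK Φ a Δ m x := by
    intro j
    induction j with
    | zero =>
      intro _ x hx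
      rw [hs0] at hx
      rw [gK_left Φ a Δ m hΔpos.le x hx]
      exact hΦmono hx
    | succ j ih =>
      intro hj x hx
      by_cases hxj : x ≤ gPt a Δ j
      · exact ih (by omega) x hxj
      · push_neg at hxj
        rw [hKval j (by omega) x hxj.le hx]
        exact chord_upper hΦconv hΔpos j x hxj.le hx
  have claim1' : ∀ x, Φ x ≤ gK Φ a Δ m x + Set.indicator (Ioi R) W x := by
    intro x
    by_cases hx : x ≤ R
    · have h1 := claim1 m le_rfl x (by rwa [hsm])
      have h2 : 0 ≤ Set.indicator (Ioi R) W x := Set.indicator_nonneg (fun y _ => hWnn y) x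
      linarith
    · push_neg at hx
      rw [Set.indicator_of_mem (show x ∈ Ioi R from hx) W]
      rw [hKtop x (by rw [hsm]; exact hx.le), hsm]
      have h3 := hL0 R
      have hmul : g0 * (x - R) ≤ gSl Φ a Δ m * (x - R) :=
        mul_le_mul_of_nonneg_right hgslm (by linarith)
      simp only [hWdef]
      nlinarith
  have hosc : ∀ j, j < m → Φ (gPt a Δ (j+1)) - Φ (gPt a Δ j) ≤ ε' := by
    intro j hj
    have h1 := hsIcc j (by omega)
    have h2 := hsIcc (j+1) (by omega)
    have hd : dist (gPt a Δ (j+1)) (gPt a Δ j) < δ := by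
      rw [Real.dist_eq, gPt_succ_sub a Δ j, abs_of_pos hΔpos]
      exact hΔδ
    have h5 := hδ _ h2 _ h1 hd
    rw [Real.dist_eq] at h5
    exact (le_abs_self _).trans h5.le
  have claim2 : ∀ j, j ≤ m → ∀ x, x ≤ gPt a Δ j →
      gK Φ a Δ m x ≤ Φ x + ε' + Set.indicator (Iio (-R)) V x := by
    intro j
    induction j with
    | zero =>
      intro _ x hx
      rw [hs0] at hx
      rw [gK_left Φ a Δ m hΔpos.le x hx]
      have h2 : Φ a ≤ Φ 0 := hΦmono (by rw [hadef]; linarith)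
      by_cases hlt : x < -R
      · rw [Set.indicator_of_mem (show x ∈ Iio (-R) from hlt) V]
        have h1 := hL0 x
        have h3 : V x = g0 * (-x) := by
          simp only [hVdef]
          rw [abs_of_neg (by linarith : x < 0)]
        rw [h3]
        linarith
      · have hxeq : x = -R := le_antisymm (by rwa [hadef] at hx) (not_lt.1 hlt)
        have h4 : Φ a = Φ x := by rw [hxeq, hadef]
        have h5 : 0 ≤ Set.indicator (Iio (-R)) V x := Set.indicator_nonneg (fun y _ => hVnn y) x
        linarith
    | succ j ih =>
      intro hj x hx
      by_cases hxj : x ≤ gPt a Δ j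
      · exact ih (by omega) x hxj
      · push_neg at hxj
        rw [hKval j (by omega) x hxj.le hx]
        have hc := gSl_nonneg (a := a) hΦconv hΦmono hΔpos (j+1)
        have hps := gPt_succ_sub a Δ j
        have hxd : x - gPt a Δ j ≤ Δ := by linarith
        have h1 : gSl Φ a Δ (j+1) * (x - gPt a Δ j) ≤ gSl Φ a Δ (j+1) * Δ :=
          mul_le_mul_of_nonneg_left hxd hc
        have h2 : gSl Φ a Δ (j+1) * Δ = Φ (gPt a Δ (j+1)) - Φ (gPt a Δ j) := by
          rw [gSl_succ, div_mul_cancel₀ _ hΔpos.ne']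
        have h3 := hosc j (by omega)
        have h4 : Φ (gPt a Δ j) ≤ Φ x := hΦmono hxj.le
        have h5 : 0 ≤ Set.indicator (Iio (-R)) V x := Set.indicator_nonneg (fun y _ => hVnn y) x
        linarith
  have claim2' : ∀ x, gK Φ a Δ m x ≤ Φ x + ε' + Set.indicator (Iio (-R)) V x := by
    intro x
    by_cases hx : x ≤ R
    · exact claim2 m le_rfl x (by rwa [hsm])
    · push_neg at hx
      rw [hKtop x (by rw [hsm]; exact hx.le)]
      have hb := beyond_lower hΦconv hΔpos j0 x (by rw [← hj0, hsm]; exact hx.le)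
      rw [← hj0] at hb
      have h5 : 0 ≤ Set.indicator (Iio (-R)) V x := Set.indicator_nonneg (fun y _ => hVnn y) x
      linarith [hε'pos.le]
  have hKw_int : ∀ (w : ℝ → ℝ), IntegrableOn w (Icc (-π) π) →
      IntegrableOn (fun t => gK Φ a Δ m (w t)) (Icc (-π) π) := by
    intro w hw
    simp only [gK]
    exact (hconst (Φ a)).add (integrable_finset_sum _ fun i _ =>
      (hhing w hw (gPt a Δ i)).const_mul _)
  have hKw_eq : ∀ (w : ℝ → ℝ), IntegrableOn w (Icc (-π) π) →
      (∫ t in Icc (-π) π, gK Φ a Δ m (w t)) = (Φ a) * (2*π)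
        + ∑ i ∈ Finset.range m, (gSl Φ a Δ (i+1) - gSl Φ a Δ i)
            * ∫ t in Icc (-π) π, max (w t - gPt a Δ i) 0 := by
    intro w hw
    have hS : ∀ i : ℕ, IntegrableOn
        (fun t => (gSl Φ a Δ (i+1) - gSl Φ a Δ i) * max (w t - gPt a Δ i) 0) (Icc (-π) π) :=
      fun i => (hhing w hw (gPt a Δ i)).const_mul _
    have e1 : (∫ t in Icc (-π) π, gK Φ a Δ m (w t))
        = (∫ t in Icc (-π) π, (Φ a : ℝ)) + ∫ t in Icc (-π) π, ∑ i ∈ Finset.range m,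
            (gSl Φ a Δ (i+1) - gSl Φ a Δ i) * max (w t - gPt a Δ i) 0 :=
      integral_add (hconst (Φ a)) (integrable_finset_sum _ fun i _ => hS i)
    have e2 : (∫ t in Icc (-π) π, ∑ i ∈ Finset.range m,
          (gSl Φ a Δ (i+1) - gSl Φ a Δ i) * max (w t - gPt a Δ i) 0)
        = ∑ i ∈ Finset.range m, ∫ t in Icc (-π) π,
            (gSl Φ a Δ (i+1) - gSl Φ a Δ i) * max (w t - gPt a Δ i) 0 :=
      integral_finset_sum _ (fun i _ => hS i)
    have e3 : (∫ t in Icc (-π) π, (Φ a : ℝ)) = Φ a * (2*π) := by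
      rw [setIntegral_const, smul_eq_mul, measureReal_def, hIvolR]; ring
    rw [e1, e2, e3]
    congr 1
    exact Finset.sum_congr rfl fun i _ => integral_const_mul _ _
  have hKle : (∫ t in Icc (-π) π, gK Φ a Δ m (u t)) ≤ ∫ t in Icc (-π) π, gK Φ a Δ m (v t) := by
    rw [hKw_eq u hu, hKw_eq v hv]
    refine add_le_add (le_refl _) (Finset.sum_le_sum fun i _ => ?_)
    exact mul_le_mul_of_nonneg_left (hinge_le hu hv hstar (gPt a Δ i))
      (sub_nonneg.2 (gSl_le_succ hΦconv hΦmono hΔpos i))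
  have hTUu_int : Integrable (fun t => Set.indicator (Ioi R) W (u t))
      (volume.restrict (Icc (-π) π)) := by
    refine Integrable.mono' hWu_int
      ((hWmeas.indicator measurableSet_Ioi).comp_aemeasurable huae).aestronglyMeasurable
      (Eventually.of_forall fun t => ?_)
    rw [Real.norm_eq_abs, abs_of_nonneg (Set.indicator_nonneg (fun y _ => hWnn y) _)]
    exact Set.indicator_le_self' (fun y _ => hWnn y) (u t)
  have hTVv_int : Integrable (fun t => Set.indicator (Iio (-R)) V (v t))
      (volume.restrict (Icc (-π) π)) := by
    refine Integrable.mono' hVv_int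
      ((hVmeas.indicator measurableSet_Iio).comp_aemeasurable hvae).aestronglyMeasurable
      (Eventually.of_forall fun t => ?_)
    rw [Real.norm_eq_abs, abs_of_nonneg (Set.indicator_nonneg (fun y _ => hVnn y) _)]
    exact Set.indicator_le_self' (fun y _ => hVnn y) (v t)
  have line1 : (∫ t in Icc (-π) π, Φ (u t)) ≤ (∫ t in Icc (-π) π, gK Φ a Δ m (u t))
      + ∫ t in Icc (-π) π, Set.indicator (Ioi R) W (u t) := by
    have h := integral_mono hΦu ((hKw_int u hu).add hTUu_int) (fun t => claim1' (u t))
    have hadd : (∫ t in Icc (-π) π, (gK Φ a Δ m (u t) + Set.indicator (Ioi R) W (u t)))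
        = (∫ t in Icc (-π) π, gK Φ a Δ m (u t))
          + ∫ t in Icc (-π) π, Set.indicator (Ioi R) W (u t) :=
      integral_add (hKw_int u hu) hTUu_int
    exact h.trans (le_of_eq hadd)
  have line3 : (∫ t in Icc (-π) π, gK Φ a Δ m (v t)) ≤ (∫ t in Icc (-π) π, Φ (v t))
      + ε' * (2*π) + ∫ t in Icc (-π) π, Set.indicator (Iio (-R)) V (v t) := by
    have h := integral_mono (hKw_int v hv) ((hΦv.add (hconst ε')).add hTVv_int)
      (fun t => claim2' (v t))
    have e1 : (∫ t in Icc (-π) π, (Φ (v t) + ε' + Set.indicator (Iio (-R)) V (v t)))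
        = (∫ t in Icc (-π) π, (Φ (v t) + ε'))
          + ∫ t in Icc (-π) π, Set.indicator (Iio (-R)) V (v t) :=
      integral_add (hΦv.add (hconst ε')) hTVv_int
    have e2 : (∫ t in Icc (-π) π, (Φ (v t) + ε')) = (∫ t in Icc (-π) π, Φ (v t))
        + ∫ t in Icc (-π) π, (ε' : ℝ) := integral_add hΦv (hconst ε')
    have e3 : (∫ t in Icc (-π) π, (ε' : ℝ)) = ε' * (2*π) := by
      rw [setIntegral_const, smul_eq_mul, measureReal_def, hIvolR]; ring
    have h2 := h.trans (le_of_eq e1)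
    rw [e2, e3] at h2
    linarith
  have hεbound : ε' * (2*π) ≤ ε/3 := by
    rw [hε'def, div_mul_eq_mul_div, div_le_div_iff₀ (by nlinarith) (by norm_num)]
    nlinarith
  have habs1 : (∫ t in Icc (-π) π, Set.indicator (Ioi R) W (u t)) ≤ ε/3 :=
    (le_abs_self _).trans hFUlt.le
  have habs2 : (∫ t in Icc (-π) π, Set.indicator (Iio (-R)) V (v t)) ≤ ε/3 :=
    (le_abs_self _).trans hFVlt.le
  linarith
end
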